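/- Let A be the generator of an irreducible continuous-time Markov chain on the finite set S = {1, …, n} with unique invariant probability measure μ of full support, and let κ, λ, γ > 0 and v : S → ℝ. Define for probability vectors ξ on S: I_e^A(ξ) = sup { −Σ_i ξ_i (A u)_i / u_i : u_i > 0 for all i }, I_e^{sym}(ξ) = ⟨u, −A u⟩_μ with u_i = √(ξ_i/μ_i), and φ_ξ(α) = Σ_i ξ_i exp(α v_i). Define the free energy functions F^A(α) = 2κ(cosh α − 1) + sup_ξ ( λ(φ_ξ(α) − 1) − γ I_e^A(ξ) ) and F^{sym}(α) = 2κ(cosh α − 1) + sup_ξ ( λ(φ_ξ(α) − 1) − γ I_e^{sym}(ξ) ), the suprema running over probability vectors ξ on S. Then F^A(α) ≤ F^{sym}(α) for every α ∈ ℝ. -/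

import Mathlib

open Matrix Finset

lemma dirichlet_nonneg' {n : ℕ} (A : Matrix (Fin n) (Fin n) ℝ) (μ u : Fin n → ℝ)
    (hA_off : ∀ i j, i ≠ j → 0 ≤ A i j) (hA_row : ∀ i, ∑ j, A i j = 0)
    (hμ_pos : ∀ i, 0 ≤ μ i) (hμ_inv : ∀ j, ∑ i, μ i * A i j = 0) :
    0 ≤ ∑ i, μ i * u i * (-(A *ᵥ u) i) := by
  have hmv : ∀ i, (A *ᵥ u) i = ∑ j, A i j * u j := by
    intro i; simp [Matrix.mulVec, dotProduct]
  have key : ∑ i, ∑ j, μ i * A i j * (u i - u j)^2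
      = 2 * ∑ i, μ i * u i * (-(A *ᵥ u) i) := by
    have e1 : ∑ i, ∑ j, μ i * A i j * u i ^ 2 = 0 := by
      refine Finset.sum_eq_zero fun i _ => ?_
      have : ∑ j, μ i * A i j * u i ^ 2 = (μ i * u i ^ 2) * ∑ j, A i j := by
        rw [Finset.mul_sum]; exact Finset.sum_congr rfl fun j _ => by ring
      rw [this, hA_row i, mul_zero]
    have e2 : ∑ i, ∑ j, μ i * A i j * u j ^ 2 = 0 := by
      rw [Finset.sum_comm]
      refine Finset.sum_eq_zero fun j _ => ?_
      have : ∑ i, μ i * A i j * u j ^ 2 = (∑ i, μ i * A i j) * u j ^ 2 := by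
        rw [Finset.sum_mul]
      rw [this, hμ_inv j, zero_mul]
    have e3 : ∑ i, ∑ j, μ i * A i j * (u i * u j)
        = ∑ i, μ i * u i * (A *ᵥ u) i := by
      refine Finset.sum_congr rfl fun i _ => ?_
      rw [hmv i, Finset.mul_sum]
      exact Finset.sum_congr rfl fun j _ => by ring
    have expand : ∑ i, ∑ j, μ i * A i j * (u i - u j)^2
        = ∑ i, ∑ j, (μ i * A i j * u i ^ 2 + μ i * A i j * u j ^ 2
            - 2 * (μ i * A i j * (u i * u j))) := by
      refine Finset.sum_congr rfl fun i _ => Finset.sum_congr rfl fun j _ => by ring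
    rw [expand]
    simp only [Finset.sum_sub_distrib, Finset.sum_add_distrib, e1, e2,
      ← Finset.mul_sum, e3]
    simp only [mul_neg, Finset.sum_neg_distrib]
    ring
  have pos : 0 ≤ ∑ i, ∑ j, μ i * A i j * (u i - u j)^2 := by
    refine Finset.sum_nonneg fun i _ => Finset.sum_nonneg fun j _ => ?_
    rcases eq_or_ne i j with h | h
    · simp [h]
    · exact mul_nonneg (mul_nonneg (hμ_pos i) (hA_off i j h)) (sq_nonneg _)
  linarith

lemma sym_le_dv' {n : ℕ} (A : Matrix (Fin n) (Fin n) ℝ) (μ ξ : Fin n → ℝ)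
    (hA_off : ∀ i j, i ≠ j → 0 ≤ A i j)
    (hμ_pos : ∀ i, 0 < μ i) (hξ0 : ∀ i, 0 ≤ ξ i) (hξsum : ∑ i, ξ i = 1) :
    ∑ i, μ i * Real.sqrt (ξ i / μ i) * (-(A *ᵥ fun j => Real.sqrt (ξ j / μ j)) i)
      ≤ sSup {x : ℝ | ∃ u : Fin n → ℝ, (∀ i, 0 < u i) ∧
        x = -∑ i, ξ i * (A *ᵥ u) i / u i} := by
  set T := {x : ℝ | ∃ u : Fin n → ℝ, (∀ i, 0 < u i) ∧
    x = -∑ i, ξ i * (A *ᵥ u) i / u i} with hTdef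
  set W : Fin n → ℝ := fun j => Real.sqrt (ξ j / μ j) with hWdef
  have hWi : ∀ i, Real.sqrt (ξ i / μ i) = W i := fun i => by rw [hWdef]
  simp only [hWi]
  have hWnn : ∀ j, 0 ≤ W j := fun j => by rw [← hWi]; exact Real.sqrt_nonneg _
  -- ξ i ≤ 1
  have hξle : ∀ i, ξ i ≤ 1 := by
    intro i
    calc ξ i ≤ ∑ j, ξ j := Finset.single_le_sum (fun j _ => hξ0 j) (Finset.mem_univ i)
    _ = 1 := hξsum
  -- T is bounded above
  have hbdd : BddAbove T := by
    refine ⟨∑ i, |A i i|, fun x hx => ?_⟩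
    obtain ⟨u, hu, rfl⟩ := hx
    have hterm : ∀ i, -(ξ i * (A *ᵥ u) i / u i) ≤ |A i i| := by
      intro i
      have hAu : A i i * u i ≤ (A *ᵥ u) i := by
        have hmv : (A *ᵥ u) i = ∑ j, A i j * u j := by
          simp [Matrix.mulVec, dotProduct]
        rw [hmv, ← Finset.add_sum_erase _ _ (Finset.mem_univ i)]
        have : 0 ≤ ∑ j ∈ Finset.univ.erase i, A i j * u j :=
          Finset.sum_nonneg fun j hj =>
            mul_nonneg (hA_off i j ((Finset.mem_erase.mp hj).1.symm)) (hu j).le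
        linarith
      have h1 : ξ i * A i i ≤ ξ i * (A *ᵥ u) i / u i := by
        rw [mul_div_assoc]
        exact mul_le_mul_of_nonneg_left ((le_div_iff₀ (hu i)).mpr hAu) (hξ0 i)
      have h2 : ξ i * (-A i i) ≤ |A i i| := by
        calc ξ i * (-A i i) ≤ ξ i * |A i i| :=
              mul_le_mul_of_nonneg_left (neg_le_abs _) (hξ0 i)
        _ ≤ 1 * |A i i| := mul_le_mul_of_nonneg_right (hξle i) (abs_nonneg _)
        _ = |A i i| := one_mul _
      have h3 : ξ i * (-A i i) = -(ξ i * A i i) := by ring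
      linarith
    calc -∑ i, ξ i * (A *ᵥ u) i / u i
        = ∑ i, -(ξ i * (A *ᵥ u) i / u i) := (Finset.sum_neg_distrib _).symm
    _ ≤ ∑ i, |A i i| := Finset.sum_le_sum fun i _ => hterm i
  -- coefficient identity
  have hcoeff : ∀ i, ξ i * (A *ᵥ W) i / W i = μ i * W i * ((A *ᵥ W) i) := by
    intro i
    rcases eq_or_lt_of_le (hξ0 i) with hz | hz
    · have hW0 : W i = 0 := by rw [← hWi, ← hz]; simp
      rw [hW0, ← hz]; simp
    · have hWpos : 0 < W i := by
        rw [← hWi]; exact Real.sqrt_pos.mpr (div_pos hz (hμ_pos i))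
      have hW2 : W i * W i = ξ i / μ i := by
        rw [← hWi]; exact Real.mul_self_sqrt (div_nonneg hz.le (hμ_pos i).le)
      rw [div_eq_iff hWpos.ne']
      rw [show μ i * W i * (A *ᵥ W) i * W i = (μ i * (W i * W i)) * (A *ᵥ W) i by ring,
        hW2]
      have : μ i * (ξ i / μ i) = ξ i := by rw [mul_comm, div_mul_eq_mul_div, mul_div_assoc, div_self (hμ_pos i).ne', mul_one]
      rw [this]
  -- the value at ε = 0
  have h0 : (∑ i, μ i * W i * (-(A *ᵥ W) i))
      = -∑ i, ξ i * (A *ᵥ fun j => W j + (0:ℝ)) i / (W i + 0) := by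
    simp only [add_zero]
    rw [← Finset.sum_neg_distrib]
    exact Finset.sum_congr rfl fun i _ => by rw [hcoeff i]; ring
  -- tendsto
  have key : Filter.Tendsto
      (fun ε : ℝ => -∑ i, ξ i * (A *ᵥ fun j => W j + ε) i / (W i + ε))
      (nhdsWithin 0 (Set.Ioi 0)) (nhds (∑ i, μ i * W i * (-(A *ᵥ W) i))) := by
    rw [h0]
    refine Filter.Tendsto.neg (tendsto_finset_sum _ fun i _ => ?_)
    by_cases hz : ξ i = 0
    · simp only [hz, zero_mul, zero_div]; exact tendsto_const_nhds
    · have hξpos : 0 < ξ i := lt_of_le_of_ne (hξ0 i) (Ne.symm hz)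
      have hnum : Continuous fun ε : ℝ => ξ i * (A *ᵥ fun j => W j + ε) i := by
        simp only [Matrix.mulVec, dotProduct]
        exact continuous_const.mul (continuous_finset_sum _ fun j _ =>
          continuous_const.mul (continuous_const.add continuous_id))
      have hden : Continuous fun ε : ℝ => W i + ε := continuous_const.add continuous_id
      have hWpos : 0 < W i := by
        rw [← hWi]; exact Real.sqrt_pos.mpr (div_pos hξpos (hμ_pos i))
      have hne : W i + (0:ℝ) ≠ 0 := by rw [add_zero]; exact hWpos.ne'
      exact ((hnum.continuousAt.div hden.continuousAt hne)).tendsto.mono_left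
        nhdsWithin_le_nhds
  refine le_of_tendsto key ?_
  filter_upwards [self_mem_nhdsWithin] with ε hε
  exact le_csSup hbdd ⟨fun j => W j + ε,
    fun j => add_pos_of_nonneg_of_pos (hWnn j) hε, rfl⟩

/-- The large deviation free energy of the active particle with state process
generated by `A` is dominated pointwise by the free energy with state process generated by
the symmetric part of `A`: `F^A(α) ≤ F^{sym}(α)` for all `α ∈ ℝ`. -/
theorem free_energy_reversible_max
    {n : ℕ} (hn : 0 < n)
    (A : Matrix (Fin n) (Fin n) ℝ) (μ : Fin n → ℝ)
    (κ lam γ : ℝ) (hκ : 0 < κ) (hlam : 0 < lam) (hγ : 0 < γ)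
    (v : Fin n → ℝ)
    -- A is a Markov generator
    (hA_off : ∀ i j, i ≠ j → 0 ≤ A i j)
    (hA_row : ∀ i, ∑ j, A i j = 0)
    -- μ is a probability measure with full support, invariant for A
    (hμ_pos : ∀ i, 0 < μ i)
    (hμ_sum : ∑ i, μ i = 1)
    (hμ_inv : ∀ j, ∑ i, μ i * A i j = 0)
    -- irreducibility/ergodicity: the kernel of A consists of the constant functions
    (h_erg : ∀ f : Fin n → ℝ, A *ᵥ f = 0 → ∃ c : ℝ, ∀ i, f i = c)
    -- the Donsker–Varadhan rate function of A
    (IeA : (Fin n → ℝ) → ℝ)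
    (hIeA : ∀ ξ, IeA ξ = sSup {x : ℝ | ∃ u : Fin n → ℝ, (∀ i, 0 < u i) ∧
      x = -∑ i, ξ i * (A *ᵥ u) i / u i})
    -- the Donsker–Varadhan rate function of sym(A): ⟨u, -Au⟩_μ with u_i = √(ξ_i/μ_i)
    (IeSym : (Fin n → ℝ) → ℝ)
    (hIeSym : ∀ ξ, IeSym ξ = ∑ i, μ i * Real.sqrt (ξ i / μ i) *
      (-(A *ᵥ fun j => Real.sqrt (ξ j / μ j)) i))
    -- the moment generating function of v under ξ
    (φ : (Fin n → ℝ) → ℝ → ℝ)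
    (hφ : ∀ ξ α, φ ξ α = ∑ i, ξ i * Real.exp (α * v i))
    -- the two free energy functions
    (FA Fsym : ℝ → ℝ)
    (hFA : ∀ α, FA α = 2 * κ * (Real.cosh α - 1) +
      sSup {y : ℝ | ∃ ξ : Fin n → ℝ, (∀ i, 0 ≤ ξ i) ∧ (∑ i, ξ i = 1) ∧
        y = lam * (φ ξ α - 1) - γ * IeA ξ})
    (hFsym : ∀ α, Fsym α = 2 * κ * (Real.cosh α - 1) +
      sSup {y : ℝ | ∃ ξ : Fin n → ℝ, (∀ i, 0 ≤ ξ i) ∧ (∑ i, ξ i = 1) ∧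
        y = lam * (φ ξ α - 1) - γ * IeSym ξ}) :
    ∀ α : ℝ, FA α ≤ Fsym α := by
  intro α
  rw [hFA α, hFsym α]
  refine add_le_add (le_refl _) ?_
  set S1 := {y : ℝ | ∃ ξ : Fin n → ℝ, (∀ i, 0 ≤ ξ i) ∧ (∑ i, ξ i = 1) ∧
    y = lam * (φ ξ α - 1) - γ * IeA ξ} with hS1def
  set S2 := {y : ℝ | ∃ ξ : Fin n → ℝ, (∀ i, 0 ≤ ξ i) ∧ (∑ i, ξ i = 1) ∧
    y = lam * (φ ξ α - 1) - γ * IeSym ξ} with hS2def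
  have hS1ne : S1.Nonempty :=
    ⟨_, μ, fun i => (hμ_pos i).le, hμ_sum, rfl⟩
  have hS2bdd : BddAbove S2 := by
    refine ⟨lam * ((∑ i, Real.exp (α * v i)) - 1), ?_⟩
    rintro y ⟨ξ, hξ0, hξs, rfl⟩
    have hsym_nonneg : 0 ≤ IeSym ξ := by
      rw [hIeSym]
      exact dirichlet_nonneg' A μ _ hA_off hA_row (fun i => (hμ_pos i).le) hμ_inv
    have hξle : ∀ i, ξ i ≤ 1 := by
      intro i
      calc ξ i ≤ ∑ j, ξ j := Finset.single_le_sum (fun j _ => hξ0 j) (Finset.mem_univ i)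
      _ = 1 := hξs
    have hφle : φ ξ α ≤ ∑ i, Real.exp (α * v i) := by
      rw [hφ]
      refine Finset.sum_le_sum fun i _ => ?_
      calc ξ i * Real.exp (α * v i) ≤ 1 * Real.exp (α * v i) :=
            mul_le_mul_of_nonneg_right (hξle i) (Real.exp_pos _).le
      _ = Real.exp (α * v i) := one_mul _
    have h1 : lam * (φ ξ α - 1) ≤ lam * ((∑ i, Real.exp (α * v i)) - 1) :=
      mul_le_mul_of_nonneg_left (sub_le_sub_right hφle 1) hlam.le
    have h2 : 0 ≤ γ * IeSym ξ := mul_nonneg hγ.le hsym_nonneg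
    linarith
  refine csSup_le hS1ne ?_
  rintro y ⟨ξ, hξ0, hξs, rfl⟩
  have hle : IeSym ξ ≤ IeA ξ := by
    rw [hIeSym, hIeA]
    exact sym_le_dv' A μ ξ hA_off hμ_pos hξ0 hξs
  calc lam * (φ ξ α - 1) - γ * IeA ξ
      ≤ lam * (φ ξ α - 1) - γ * IeSym ξ := by
        have := mul_le_mul_of_nonneg_left hle hγ.le
        linarith
  _ ≤ sSup S2 := le_csSup hS2bdd ⟨ξ, hξ0, hξs, rfl⟩
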